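/- Let c be a positive integer, let d₁ and d₂ be positive divisors of c, and let A, B, m be integers. Then Σ_{1≤b≤c, gcd(b,c)=1} e^{2πi A b̄^{(d₁)}/d₁} · e^{−2πi B b̄^{(d₂)}/d₂} · e^{2πi b m/c} = S((c/d₁)A − (c/d₂)B, m; c), where b̄^{(d)} denotes any integer inverse of b modulo d (each exponential factor is independent of the choice). -/

import Mathlib

/-- A canonical integer inverse of `b` modulo `d` (meaningful when `gcd(b,d)=1`). -/
noncomputable def intInvMod (d : ℕ) (b : ℤ) : ℤ := (((b : ZMod d)⁻¹ : ZMod d).val : ℤ)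

/-- The Kloosterman sum `S(u,h;c) = ∑_{1≤x≤c, gcd(x,c)=1} e^{2πi(ux̄+hx)/c}`. -/
noncomputable def kloostermanS (u h : ℤ) (c : ℕ) : ℂ :=
  ∑ x ∈ Finset.Icc 1 c,
    if Nat.gcd x c = 1 then
      Complex.exp (2 * Real.pi * Complex.I * ((u * intInvMod c x + h * x : ℤ) : ℂ) / c)
    else 0

lemma intInvMod_spec (d : ℕ) (hd : 0 < d) (b : ℕ) (h : Nat.gcd b d = 1) :
    (b : ℤ) * intInvMod d (b : ℤ) ≡ 1 [ZMOD d] := by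
  haveI : NeZero d := ⟨hd.ne'⟩
  have hu : IsUnit ((b : ℕ) : ZMod d) := (ZMod.isUnit_iff_coprime b d).mpr h
  rw [← ZMod.intCast_eq_intCast_iff]
  unfold intInvMod
  push_cast
  simp only [ZMod.natCast_val, ZMod.cast_id]
  exact ZMod.mul_inv_of_unit _ hu

lemma inv_congr (c d : ℕ) (hd : 0 < d) (hc : 0 < c) (hdvd : d ∣ c) (b : ℕ)
    (h : Nat.gcd b c = 1) : (d:ℤ) ∣ intInvMod d (b:ℤ) - intInvMod c (b:ℤ) := by
  have hbd : Nat.gcd b d = 1 := Nat.Coprime.coprime_dvd_right hdvd h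
  have h1 := intInvMod_spec d hd b hbd
  have h2 := (intInvMod_spec c hc b h).of_dvd (Int.natCast_dvd_natCast.mpr hdvd)
  have h3 : (b:ℤ) * intInvMod d (b:ℤ) ≡ (b:ℤ) * intInvMod c (b:ℤ) [ZMOD d] :=
    h1.trans h2.symm
  have hg : Int.gcd (d:ℤ) (b:ℤ) = 1 := by
    rw [Int.gcd_natCast_natCast, Nat.gcd_comm]; exact hbd
  have h4 := h3.cancel_left_div_gcd (by exact_mod_cast hd : (0:ℤ) < d)
  rw [hg] at h4
  simpa using h4.symm.dvd

/-- Complete-sum identity producing a Kloosterman sum: for divisors `d₁, d₂` of `c`,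
`∑_{1≤b≤c, gcd(b,c)=1} e^{2πiAb̄/d₁} e^{-2πiBb̄/d₂} e^{2πibm/c}
  = S((c/d₁)A - (c/d₂)B, m; c)`. -/
theorem complete_sum_to_kloosterman
    (c d₁ d₂ : ℕ) (hc : 0 < c) (hd₁pos : 0 < d₁) (hd₂pos : 0 < d₂)
    (hd₁ : d₁ ∣ c) (hd₂ : d₂ ∣ c) (A B m : ℤ) :
    (∑ b ∈ Finset.Icc 1 c,
        if Nat.gcd b c = 1 then
          Complex.exp (2 * Real.pi * Complex.I * ((A * intInvMod d₁ b : ℤ) : ℂ) / d₁) *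
            Complex.exp (-(2 * Real.pi * Complex.I * ((B * intInvMod d₂ b : ℤ) : ℂ) / d₂)) *
            Complex.exp (2 * Real.pi * Complex.I * ((b * m : ℤ) : ℂ) / c)
        else 0) =
      kloostermanS (((c / d₁ : ℕ) : ℤ) * A - ((c / d₂ : ℕ) : ℤ) * B) m c := by
  unfold kloostermanS
  apply Finset.sum_congr rfl
  intro b _
  by_cases h : Nat.gcd b c = 1
  · simp only [h, if_true]
    obtain ⟨k₁, hk₁⟩ := inv_congr c d₁ hd₁pos hc hd₁ b h
    obtain ⟨k₂, hk₂⟩ := inv_congr c d₂ hd₂pos hc hd₂ b h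
    rw [← Complex.exp_add, ← Complex.exp_add]
    have key : (2 * Real.pi * Complex.I * ((A * intInvMod d₁ (b:ℤ) : ℤ) : ℂ) / d₁ +
          -(2 * Real.pi * Complex.I * ((B * intInvMod d₂ (b:ℤ) : ℤ) : ℂ) / d₂) +
          2 * Real.pi * Complex.I * (((b:ℤ) * m : ℤ) : ℂ) / c)
        = 2 * Real.pi * Complex.I *
            (((((c / d₁ : ℕ) : ℤ) * A - ((c / d₂ : ℕ) : ℤ) * B) * intInvMod c (b:ℤ)
              + m * (b:ℤ) : ℤ) : ℂ) / c
          + (A * k₁ - B * k₂ : ℤ) * (2 * Real.pi * Complex.I) := by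
      have hc' : (c:ℂ) ≠ 0 := Nat.cast_ne_zero.mpr hc.ne'
      have hd₁' : (d₁:ℂ) ≠ 0 := Nat.cast_ne_zero.mpr hd₁pos.ne'
      have hd₂' : (d₂:ℂ) ≠ 0 := Nat.cast_ne_zero.mpr hd₂pos.ne'
      have he₁ : (c:ℂ) = (d₁:ℂ) * ((c / d₁ : ℕ) : ℂ) := by
        rw [← Nat.cast_mul, Nat.mul_div_cancel' hd₁]
      have he₂ : (c:ℂ) = (d₂:ℂ) * ((c / d₂ : ℕ) : ℂ) := by
        rw [← Nat.cast_mul, Nat.mul_div_cancel' hd₂]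
      have hi₁ : ((intInvMod d₁ (b:ℤ) : ℤ) : ℂ)
          = ((intInvMod c (b:ℤ) : ℤ) : ℂ) + (d₁:ℂ) * (k₁:ℤ) := by
        have : (intInvMod d₁ (b:ℤ) : ℤ) = intInvMod c (b:ℤ) + (d₁:ℤ) * k₁ := by linarith [hk₁]
        rw [this]; push_cast; ring
      have hi₂ : ((intInvMod d₂ (b:ℤ) : ℤ) : ℂ)
          = ((intInvMod c (b:ℤ) : ℤ) : ℂ) + (d₂:ℂ) * (k₂:ℤ) := by
        have : (intInvMod d₂ (b:ℤ) : ℤ) = intInvMod c (b:ℤ) + (d₂:ℤ) * k₂ := by linarith [hk₂]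
        rw [this]; push_cast; ring
      push_cast [-Int.natCast_ediv]
      rw [hi₁, hi₂]
      field_simp
      linear_combination (↑A * ↑(intInvMod c ↑b) * (d₂:ℂ)) * he₁ - (↑(intInvMod c ↑b) * (d₁:ℂ) * ↑B) * he₂
    rw [key, Complex.exp_add]
    rw [Complex.exp_int_mul_two_pi_mul_I]
    ring
  · simp [h]
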